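/- Let X be a proper complete metric space, let f_1, ..., f_N : X → X be continuous maps with Hutchinson operator F, let A be a nonempty compact set with F(A) = A, and let U be an open set with A ⊆ U such that F^k(B) → A in the Hausdorff metric for every nonempty compact B ⊆ U. Fix p ∈ (0, 1/N] and x_0 ∈ U. Let (Ω, 𝔉, P) be a probability space and let σ_1, σ_2, ... : Ω → {1,...,N} be random variables such that for every k ≥ 1 and every n ∈ {1,...,N}, the conditional probability that σ_k = n given σ_1, ..., σ_{k-1} is at least p; that is, for every event E measurable with respect to σ_1,...,σ_{k-1}, P({σ_k = n} ∩ E) ≥ p · P(E). Define the random orbit x_k(ω) = f_{σ_k(ω)}(x_{k-1}(ω)) for k ≥ 1. Then, with probability one, for every ε > 0 there is an integer K such that for all L ≥ K the Hausdorff distance between A and the tail set {x_k : k ≥ L} is less than ε; that is, almost surely the tail sets {x_k}_{k≥K} converge to A in the Hausdorff distance as K → ∞. -/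

import Mathlib

open Metric Filter MeasureTheory
open scoped Topology ENNReal

lemma chaos_game_aio {Ω : Type*} [m0 : MeasurableSpace Ω] (P : Measure Ω) [IsProbabilityMeasure P]
    (G : ℕ → MeasurableSpace Ω) (hGle : ∀ n, G n ≤ m0) (hGmono : Monotone G)
    (S : ℕ → Set Ω) (hS : ∀ n, MeasurableSet[G (n + 1)] (S n))
    (q : ℝ≥0∞) (hq0 : q ≠ 0) (hq1 : q ≤ 1)
    (hb : ∀ n (E : Set Ω), MeasurableSet[G n] E → q * P E ≤ P (S n ∩ E)) :
    ∀ᵐ ω ∂P, ∀ n, ∃ j ≥ n, ω ∈ S j := by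
  have hSm : ∀ n, MeasurableSet (S n) := fun n => hGle (n + 1) _ (hS n)
  -- the block of failures
  set Blk : ℕ → ℕ → Set Ω := fun n J => ⋂ j ∈ Finset.Ico n (n + J), (S j)ᶜ with hBlk
  have hBlkMeas : ∀ n J, MeasurableSet[G (n + J)] (Blk n J) := by
    intro n J
    refine MeasurableSet.biInter (Finset.Ico n (n + J)).countable_toSet (fun j hj => ?_)
    have hj' : j ∈ Finset.Ico n (n + J) := hj
    rw [Finset.mem_Ico] at hj'
    exact (hGmono (Nat.succ_le_of_lt hj'.2) _ (hS j)).compl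
  have hBlkBound : ∀ n J, P (Blk n J) ≤ (1 - q) ^ J := by
    intro n J
    induction J with
    | zero =>
      simp only [hBlk, Nat.add_zero, Finset.Ico_self, Finset.notMem_empty, Set.iInter_of_empty,
        Set.iInter_univ, pow_zero, measure_univ, le_refl]
    | succ J ih =>
      have hsplit : Blk n (J + 1) = Blk n J ∩ (S (n + J))ᶜ := by
        simp only [hBlk, ← Nat.add_assoc, Nat.Ico_succ_right_eq_insert_Ico (Nat.le_add_right n J)]
        rw [Finset.set_biInter_insert]
        exact Set.inter_comm _ _
      have hBm : MeasurableSet (Blk n J) := hGle _ _ (hBlkMeas n J)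
      have h1 : P (Blk n J ∩ S (n + J)) + P (Blk n J \ S (n + J)) = P (Blk n J) :=
        measure_inter_add_diff _ (hSm (n + J))
      have h2 : q * P (Blk n J) ≤ P (Blk n J ∩ S (n + J)) := by
        have := hb (n + J) (Blk n J) (hBlkMeas n J)
        rwa [Set.inter_comm] at this
      have h3 : P (Blk n J \ S (n + J)) + q * P (Blk n J) ≤ P (Blk n J) := by
        calc P (Blk n J \ S (n + J)) + q * P (Blk n J)
            ≤ P (Blk n J \ S (n + J)) + P (Blk n J ∩ S (n + J)) := by gcongr
          _ = P (Blk n J) := by rw [add_comm]; exact h1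
      have h4 : P (Blk n J \ S (n + J)) ≤ (1 - q) * P (Blk n J) := by
        have := ENNReal.le_sub_of_add_le_right (by
          exact ENNReal.mul_ne_top (lt_of_le_of_lt hq1 ENNReal.one_lt_top).ne (measure_ne_top P _)) h3
        rw [ENNReal.sub_mul (fun _ _ => measure_ne_top P _), one_mul]
        exact this
      calc P (Blk n (J + 1)) = P (Blk n J \ S (n + J)) := by
            rw [hsplit, Set.diff_eq, Set.inter_comm (Blk n J) _, Set.inter_comm _ (Blk n J)]
        _ ≤ (1 - q) * P (Blk n J) := h4
        _ ≤ (1 - q) * (1 - q) ^ J := by gcongr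
        _ = (1 - q) ^ (J + 1) := by ring
  -- the bad set has measure zero
  have hBad : ∀ n, P (⋂ j, ⋂ (_ : n ≤ j), (S j)ᶜ) = 0 := by
    intro n
    have hle : ∀ J, P (⋂ j, ⋂ (_ : n ≤ j), (S j)ᶜ) ≤ (1 - q) ^ J := by
      intro J
      refine le_trans (measure_mono ?_) (hBlkBound n J)
      intro ω hω
      simp only [Set.mem_iInter] at hω ⊢
      refine Set.mem_iInter₂.2 fun j hj => ?_
      simp only [Finset.mem_Ico] at hj
      exact hω j hj.1
    have hlim : Tendsto (fun J : ℕ => (1 - q) ^ J) atTop (𝓝 0) :=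
      ENNReal.tendsto_pow_atTop_nhds_zero_of_lt_one
        (ENNReal.sub_lt_self ENNReal.one_ne_top one_ne_zero hq0)
    have := le_of_tendsto_of_tendsto' tendsto_const_nhds hlim hle
    exact le_antisymm this zero_le
  have hU : P (⋃ n, ⋂ j, ⋂ (_ : n ≤ j), (S j)ᶜ) = 0 :=
    measure_iUnion_null fun n => hBad n
  rw [ae_iff]
  refine measure_mono_null ?_ hU
  intro ω hω
  simp only [Set.mem_setOf_eq, not_forall, not_exists] at hω
  obtain ⟨n, hn⟩ := hω
  refine Set.mem_iUnion.2 ⟨n, Set.mem_iInter₂.2 fun j hj => ?_⟩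
  intro hSj
  exact hn j ⟨hj, hSj⟩

theorem chaos_game {X : Type*} [MetricSpace X] [ProperSpace X] [CompleteSpace X]
    {N : ℕ} (f : Fin N → X → X) (hf : ∀ i, Continuous (f i))
    (F : Set X → Set X) (hF : ∀ S : Set X, F S = ⋃ i, f i '' S)
    (A : Set X) (hA : A.Nonempty) (hAc : IsCompact A) (hfix : F A = A)
    (U : Set X) (hU : IsOpen U) (hAU : A ⊆ U)
    (hattr : ∀ B : Set X, B.Nonempty → IsCompact B → B ⊆ U →
      Tendsto (fun k => hausdorffDist (F^[k] B) A) atTop (𝓝 0))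
    (p : ℝ) (hp : 0 < p) (hpN : p ≤ 1 / N)
    (x₀ : X) (hx₀ : x₀ ∈ U)
    {Ω : Type*} [MeasurableSpace Ω] (P : Measure Ω) [IsProbabilityMeasure P]
    (σ : ℕ → Ω → Fin N) (hσ : ∀ k, Measurable (σ k))
    (hcond : ∀ (k : ℕ) (n : Fin N) (E : Set Ω),
      MeasurableSet[⨆ j : Fin k, MeasurableSpace.comap (σ (j : ℕ)) ⊤] E →
      ENNReal.ofReal p * P E ≤ P ({ω | σ k ω = n} ∩ E))
    (x : ℕ → Ω → X) (hx0 : ∀ ω, x 0 ω = x₀)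
    (hxk : ∀ (k : ℕ) (ω : Ω), x (k + 1) ω = f (σ k ω) (x k ω)) :
    ∀ᵐ ω ∂P, ∀ ε > (0 : ℝ), ∃ K : ℕ, ∀ L ≥ K,
      hausdorffDist A ((fun k => x k ω) '' Set.Ici L) < ε := by
  letI mX : MeasurableSpace X := borel X
  haveI : BorelSpace X := ⟨rfl⟩
  -- basic facts about N and p
  have hN : 0 < N := by
    rcases Nat.eq_zero_or_pos N with h | h
    · exfalso; rw [h] at hpN; simp at hpN; linarith
    · exact h
  have hp1 : p ≤ 1 := by
    refine hpN.trans ?_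
    rw [div_le_one (by exact_mod_cast hN)]
    exact_mod_cast hN
  set i₀ : Fin N := ⟨0, hN⟩ with hi₀
  -- the filtration
  set 𝔉 : ℕ → MeasurableSpace Ω :=
    (fun t => ⨆ j : Fin t, MeasurableSpace.comap (σ (j : ℕ)) ⊤) with h𝔉
  have h𝔉mono : Monotone 𝔉 := by
    intro s t hst
    exact iSup_le fun j => le_iSup_of_le ⟨j.1, lt_of_lt_of_le j.2 hst⟩ le_rfl
  have h𝔉le : ∀ t, 𝔉 t ≤ (inferInstance : MeasurableSpace Ω) := by
    intro t
    refine iSup_le fun j => ?_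
    intro s hs
    obtain ⟨s', _, rfl⟩ := hs
    exact hσ j trivial
  have hσ𝔉 : ∀ (t : ℕ) (n : Fin N), MeasurableSet[𝔉 (t + 1)] {ω | σ t ω = n} := by
    intro t n
    have : {ω | σ t ω = n} = σ t ⁻¹' {n} := rfl
    rw [this]
    exact le_iSup (fun j : Fin (t + 1) => MeasurableSpace.comap (σ (j : ℕ)) ⊤)
      ⟨t, Nat.lt_succ_self t⟩ _ ⟨{n}, trivial, rfl⟩
  have hx𝔉 : ∀ t, Measurable[𝔉 t] (x t) := by
    intro t
    induction t with
    | zero =>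
      have : x 0 = fun _ => x₀ := funext hx0
      rw [this]; exact measurable_const
    | succ t ih =>
      have hxt : x (t + 1) = fun ω => f (σ t ω) (x t ω) := funext (hxk t)
      rw [hxt]
      intro s hs
      have hpre : (fun ω => f (σ t ω) (x t ω)) ⁻¹' s
          = ⋃ i : Fin N, ({ω | σ t ω = i} ∩ x t ⁻¹' (f i ⁻¹' s)) := by
        ext ω
        simp only [Set.mem_preimage, Set.mem_iUnion, Set.mem_inter_iff, Set.mem_setOf_eq]
        constructor
        · intro h; exact ⟨σ t ω, rfl, h⟩
        · rintro ⟨i, hi, h⟩; rw [hi]; exact h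
      rw [hpre]
      exact MeasurableSet.iUnion fun i => (hσ𝔉 t i).inter
        (((ih.mono (h𝔉mono (Nat.le_succ t)) le_rfl)) ((hf i).measurable hs))
  have hxmeas : ∀ t, Measurable (x t) := fun t => (hx𝔉 t).mono (h𝔉le t) le_rfl
  -- words and their action
  set G : List (Fin N) → X → X := fun w z => w.foldl (fun y i => f i y) z with hGdef
  have hGcont : ∀ w, Continuous (G w) := by
    intro w
    induction w with
    | nil => exact continuous_id
    | cons i w ih => exact ih.comp (hf i)
  have hGconcat : ∀ (w : List (Fin N)) (i : Fin N) (z : X), G (w.concat i) z = f i (G w z) := by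
    intro w i z
    simp [hGdef, List.concat_eq_append, List.foldl_append]
  -- iterates of F
  have hFiter : ∀ (k : ℕ) (B : Set X), F^[k + 1] B = F (F^[k] B) := fun k B =>
    Function.iterate_succ_apply' F k B
  have hFne : ∀ (k : ℕ) (B : Set X), B.Nonempty → (F^[k] B).Nonempty := by
    intro k B hB
    induction k with
    | zero => exact hB
    | succ k ih =>
      rw [hFiter, hF]
      obtain ⟨y, hy⟩ := ih
      exact ⟨f i₀ y, Set.mem_iUnion.2 ⟨i₀, ⟨y, hy, rfl⟩⟩⟩
  have hFcpt : ∀ (k : ℕ) (B : Set X), IsCompact B → IsCompact (F^[k] B) := by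
    intro k B hB
    induction k with
    | zero => exact hB
    | succ k ih =>
      rw [hFiter, hF]
      exact isCompact_iUnion fun i => ih.image (hf i)
  have hfin : ∀ (k : ℕ) (B : Set X), B.Nonempty → IsCompact B →
      EMetric.hausdorffEdist (F^[k] B) A ≠ ⊤ := fun k B hB hBc =>
    hausdorffEdist_ne_top_of_nonempty_of_bounded (hFne k B hB) hA
      (hFcpt k B hBc).isBounded hAc.isBounded
  have hword : ∀ (k : ℕ) (z y : X), y ∈ F^[k] {z} →
      ∃ w : List (Fin N), w.length = k ∧ y = G w z := by
    intro k
    induction k with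
    | zero =>
      intro z y hy
      exact ⟨[], rfl, by simpa [hGdef] using hy⟩
    | succ k ih =>
      intro z y hy
      rw [hFiter, hF] at hy
      obtain ⟨i, y', hy', rfl⟩ := by
        simpa only [Set.mem_iUnion, Set.mem_image] using hy
      obtain ⟨w, hwl, rfl⟩ := ih z y' hy'
      exact ⟨w.concat i, by simp [hwl], (hGconcat w i z).symm⟩
  have horbit : ∀ (k : ℕ) (ω : Ω), x k ω ∈ F^[k] {x₀} := by
    intro k ω
    induction k with
    | zero => simp [hx0 ω]
    | succ k ih =>
      rw [hFiter, hF]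
      exact Set.mem_iUnion.2 ⟨σ k ω, ⟨x k ω, ih, (hxk k ω).symm⟩⟩
  have hfollow : ∀ (w : List (Fin N)) (t : ℕ) (ω : Ω),
      (∀ j (hj : j < w.length), σ (t + j) ω = w.get ⟨j, hj⟩) →
      x (t + w.length) ω = G w (x t ω) := by
    intro w
    induction w with
    | nil => intro t ω _; simp [hGdef]
    | cons i w ih =>
      intro t ω hw
      have h0 : σ t ω = i := by simpa using hw 0 (by simp)
      have harith : t + (i :: w).length = (t + 1) + w.length := by
        simp [List.length_cons]; omega
      rw [harith, ih (t + 1) ω (fun j hj => by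
        have := hw (j + 1) (by simpa using Nat.succ_lt_succ hj)
        simpa [Nat.add_assoc, Nat.add_comm 1 j] using this)]
      rw [hxk t ω, h0]
      rfl
  -- conditional probability of following a word
  have hprobword : ∀ (w : List (Fin N)) (t : ℕ) (E : Set Ω), MeasurableSet[𝔉 t] E →
      ENNReal.ofReal (p ^ w.length) * P E ≤
        P ({ω | ∀ j (hj : j < w.length), σ (t + j) ω = w.get ⟨j, hj⟩} ∩ E) := by
    intro w
    induction w with
    | nil =>
      intro t E hE
      have h1 : {ω : Ω | ∀ j (hj : j < ([] : List (Fin N)).length),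
          σ (t + j) ω = ([] : List (Fin N)).get ⟨j, hj⟩} = Set.univ := by
        ext ω; simp
      rw [h1, Set.univ_inter]
      simp
    | cons i w ih =>
      intro t E hE
      have hE' : MeasurableSet[𝔉 (t + 1)] ({ω | σ t ω = i} ∩ E) :=
        (hσ𝔉 t i).inter (h𝔉mono (Nat.le_succ t) E hE)
      have h1 := ih (t + 1) _ hE'
      have h2 := hcond t i E hE
      have hset : {ω : Ω | ∀ j (hj : j < (i :: w).length), σ (t + j) ω = (i :: w).get ⟨j, hj⟩}
          = {ω : Ω | ∀ j (hj : j < w.length), σ ((t + 1) + j) ω = w.get ⟨j, hj⟩}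
            ∩ {ω | σ t ω = i} := by
        ext ω
        simp only [Set.mem_setOf_eq, Set.mem_inter_iff, List.length_cons]
        constructor
        · intro h
          refine ⟨fun j hj => ?_, by simpa using h 0 (Nat.succ_pos _)⟩
          have := h (j + 1) (Nat.succ_lt_succ hj)
          simpa [Nat.add_assoc, Nat.add_comm 1 j] using this
        · rintro ⟨h, h0⟩
          intro j hj
          match j, hj with
          | 0, _ => simpa using h0
          | (j + 1), hj =>
            have := h j (Nat.lt_of_succ_lt_succ hj)
            simpa [Nat.add_assoc, Nat.add_comm 1 j] using this
      calc ENNReal.ofReal (p ^ (i :: w).length) * P E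
          = ENNReal.ofReal (p ^ w.length) * (ENNReal.ofReal p * P E) := by
            rw [List.length_cons, pow_succ, ENNReal.ofReal_mul (pow_nonneg hp.le _)]
            ring
        _ ≤ ENNReal.ofReal (p ^ w.length) * P ({ω | σ t ω = i} ∩ E) := by gcongr
        _ ≤ P ({ω : Ω | ∀ j (hj : j < w.length), σ ((t + 1) + j) ω = w.get ⟨j, hj⟩}
              ∩ ({ω | σ t ω = i} ∩ E)) := h1
        _ = P ({ω : Ω | ∀ j (hj : j < (i :: w).length), σ (t + j) ω = (i :: w).get ⟨j, hj⟩}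
              ∩ E) := by rw [hset, Set.inter_assoc]
  -- deterministic approach to the attractor
  have htail : ∀ δ : ℝ, 0 < δ → ∃ T : ℕ, ∀ k, T ≤ k → ∀ ω, infDist (x k ω) A < δ := by
    intro δ hδ
    have h := hattr {x₀} ⟨x₀, rfl⟩ isCompact_singleton (Set.singleton_subset_iff.2 hx₀)
    obtain ⟨T, hT⟩ := eventually_atTop.1 (h.eventually (gt_mem_nhds hδ))
    exact ⟨T, fun k hk ω => lt_of_le_of_lt
      (infDist_le_hausdorffDist_of_mem (horbit k ω)
        (hfin k {x₀} ⟨x₀, rfl⟩ isCompact_singleton)) (hT k hk)⟩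
  -- a compact neighborhood of A inside U
  obtain ⟨δ₀, hδ₀, hDU⟩ := hAc.exists_cthickening_subset_open hU hAU
  set D := cthickening δ₀ A with hDdef
  have hDc : IsCompact D := hAc.cthickening
  obtain ⟨T₀, hT₀⟩ := htail δ₀ hδ₀
  have hxD : ∀ k, T₀ ≤ k → ∀ ω, x k ω ∈ D := by
    intro k hk ω
    obtain ⟨a, ha, hda⟩ := (infDist_lt_iff hA).1 (hT₀ k hk ω)
    exact mem_cthickening_of_dist_le _ _ _ _ ha hda.le
  -- the key almost-sure statement for a fixed target point and radius
  have hstar : ∀ a ∈ A, ∀ ε : ℝ, 0 < ε → ∀ᵐ ω ∂P, ∀ L : ℕ, ∃ k, L ≤ k ∧ dist (x k ω) a < ε := by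
    intro a ha ε hε
    -- for each point of D there is a word bringing it close to a
    have hzw : ∀ z : ↥D, ∃ w : List (Fin N), dist (G w (z : X)) a < ε := by
      rintro ⟨z, hz⟩
      have h := hattr {z} ⟨z, rfl⟩ isCompact_singleton (Set.singleton_subset_iff.2 (hDU hz))
      obtain ⟨T, hT⟩ := eventually_atTop.1 (h.eventually (gt_mem_nhds hε))
      obtain ⟨y, hy, hdy⟩ := exists_dist_lt_of_hausdorffDist_lt' ha (hT T le_rfl)
        (hfin T {z} ⟨z, rfl⟩ isCompact_singleton)
      obtain ⟨w, _, rfl⟩ := hword T z y hy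
      exact ⟨w, hdy⟩
    choose wz hwz using hzw
    set V : ↥D → Set X := fun z => G (wz z) ⁻¹' ball a ε with hV
    have hcover : D ⊆ ⋃ z : ↥D, V z := fun z hz =>
      Set.mem_iUnion.2 ⟨⟨z, hz⟩, by exact mem_ball.2 (hwz ⟨z, hz⟩)⟩
    obtain ⟨tf, htf⟩ := hDc.elim_finite_subcover V
      (fun z => (hGcont (wz z)).isOpen_preimage _ isOpen_ball) hcover
    set l := tf.toList with hl
    set M := tf.sup fun z => (wz z).length with hM
    set g : ℕ → Set X := fun n => if h : n < l.length then D ∩ V (l.get ⟨n, h⟩) else ∅ with hg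
    set wn : ℕ → List (Fin N) := fun n =>
      if h : n < l.length then wz (l.get ⟨n, h⟩) else [] with hwn
    have hgmeas : ∀ n, MeasurableSet (g n) := by
      intro n
      simp only [hg]
      split
      · exact (isClosed_cthickening.measurableSet).inter
          (((hGcont _).isOpen_preimage _ isOpen_ball).measurableSet)
      · exact MeasurableSet.empty
    have hgD : ∀ n, g n ⊆ D := by
      intro n z hz
      simp only [hg] at hz
      split at hz
      · exact hz.1
      · exact absurd hz (Set.notMem_empty z)
    have hgunion : D ⊆ ⋃ n, g n := by
      intro z hz
      obtain ⟨z', hz't, hz'V⟩ := Set.mem_iUnion₂.1 (htf hz)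
      obtain ⟨n, hn⟩ := List.mem_iff_get.1 (Finset.mem_toList.2 hz't)
      refine Set.mem_iUnion.2 ⟨n.1, ?_⟩
      simp only [hg]
      rw [dif_pos n.2]
      constructor
      · exact hz
      · have : l.get ⟨n.1, n.2⟩ = z' := hn
        rw [this]
        exact hz'V
    have hwnlen : ∀ n, (wn n).length ≤ M := by
      intro n
      simp only [hwn]
      split
      · next h =>
        rw [hM]
        exact Finset.le_sup (f := fun z => (wz z).length)
          (Finset.mem_toList.1 (List.get_mem l _))
      · simp
    have hwnball : ∀ n (z : X), z ∈ g n → dist (G (wn n) z) a < ε := by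
      intro n z hz
      simp only [hg] at hz
      split at hz
      · next h =>
        simp only [hwn]
        rw [dif_pos h]
        exact mem_ball.1 hz.2
      · exact absurd hz (Set.notMem_empty z)
    -- success events
    set Sev : ℕ → Set Ω := fun t' => {ω | ∃ j, j ≤ M ∧ dist (x (t' + j) ω) a < ε} with hSev
    have hSev𝔉 : ∀ t', MeasurableSet[𝔉 (t' + M + 1)] (Sev t') := by
      intro t'
      have : Sev t' = ⋃ j : ℕ, ⋃ (_ : j ≤ M), (x (t' + j)) ⁻¹' (ball a ε) := by
        ext ω
        simp [hSev, Set.mem_iUnion, mem_ball]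
      rw [this]
      refine MeasurableSet.iUnion fun j => MeasurableSet.iUnion fun hj => ?_
      exact ((hx𝔉 (t' + j)).mono (h𝔉mono (by omega)) le_rfl) isOpen_ball.measurableSet
    -- the conditional probability bound for the success events
    have hclaim1 : ∀ t', T₀ ≤ t' → ∀ E : Set Ω, MeasurableSet[𝔉 t'] E →
        ENNReal.ofReal (p ^ M) * P E ≤ P (Sev t' ∩ E) := by
      intro t' ht' E hE
      set C : ℕ → Set X := disjointed g with hC
      have hCmeas : ∀ n, MeasurableSet (C n) := MeasurableSet.disjointed hgmeas
      set En : ℕ → Set Ω := fun n => E ∩ x t' ⁻¹' (C n) with hEn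
      have hEnF : ∀ n, MeasurableSet[𝔉 t'] (En n) := fun n =>
        hE.inter (hx𝔉 t' (hCmeas n))
      have hEnm : ∀ n, MeasurableSet (En n) := fun n => h𝔉le t' _ (hEnF n)
      have hEdecomp : E = ⋃ n, En n := by
        ext ω
        constructor
        · intro hω
          have hxDω : x t' ω ∈ ⋃ n, C n := by
            rw [hC, iUnion_disjointed]
            exact hgunion (hxD t' ht' ω)
          obtain ⟨n, hn⟩ := Set.mem_iUnion.1 hxDω
          exact Set.mem_iUnion.2 ⟨n, hω, hn⟩
        · rintro hω
          obtain ⟨n, hn⟩ := Set.mem_iUnion.1 hω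
          exact hn.1
      have hdisjC := disjoint_disjointed g
      have hdisj : Pairwise (Function.onFun Disjoint En) := by
        intro m n hmn
        refine Set.disjoint_left.2 fun ω hω1 hω2 => ?_
        exact Set.disjoint_left.1 (hdisjC hmn) hω1.2 hω2.2
      set Fw : ℕ → Set Ω := fun n =>
        {ω | ∀ j (hj : j < (wn n).length), σ (t' + j) ω = (wn n).get ⟨j, hj⟩} with hFw
      have hFwm : ∀ n, MeasurableSet (Fw n) := by
        intro n
        have : Fw n = ⋂ j : Fin (wn n).length, (σ (t' + j.1)) ⁻¹' {(wn n).get j} := by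
          ext ω
          simp only [hFw, Set.mem_setOf_eq, Set.mem_iInter, Set.mem_preimage,
            Set.mem_singleton_iff]
          exact ⟨fun h j => h j.1 j.2, fun h j hj => h ⟨j, hj⟩⟩
        rw [this]
        exact MeasurableSet.iInter fun j => hσ _ trivial
      have hsub : ∀ n, Fw n ∩ En n ⊆ Sev t' ∩ En n := by
        rintro n ω ⟨hω1, hω2⟩
        refine ⟨⟨(wn n).length, hwnlen n, ?_⟩, hω2⟩
        rw [hfollow (wn n) t' ω hω1]
        exact hwnball n _ (disjointed_subset g n hω2.2)
      have hdisj2 : Pairwise (Function.onFun Disjoint fun n => Fw n ∩ En n) := by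
        intro m n hmn
        exact (hdisj hmn).mono Set.inter_subset_right Set.inter_subset_right
      calc ENNReal.ofReal (p ^ M) * P E
          = ENNReal.ofReal (p ^ M) * ∑' n, P (En n) := by
            rw [← measure_iUnion hdisj hEnm, ← hEdecomp]
        _ = ∑' n, ENNReal.ofReal (p ^ M) * P (En n) := ENNReal.tsum_mul_left.symm
        _ ≤ ∑' n, P (Fw n ∩ En n) := by
            refine ENNReal.tsum_le_tsum fun n => ?_
            refine le_trans (mul_le_mul_left
              (ENNReal.ofReal_le_ofReal (pow_le_pow_of_le_one hp.le hp1 (hwnlen n))) _)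
              (hprobword (wn n) t' (En n) (hEnF n))
        _ = P (⋃ n, Fw n ∩ En n) :=
            (measure_iUnion hdisj2 fun n => (hFwm n).inter (hEnm n)).symm
        _ ≤ P (Sev t' ∩ E) := by
            refine measure_mono ?_
            refine Set.iUnion_subset fun n => ?_
            refine (hsub n).trans ?_
            exact Set.inter_subset_inter_right _ Set.inter_subset_left
    -- apply the infinitely-often lemma along the grid
    set tg : ℕ → ℕ := fun j => T₀ + j * (M + 1) with htg
    have haio := chaos_game_aio P (fun j => 𝔉 (tg j)) (fun j => h𝔉le _)
      (fun j k hjk => h𝔉mono (by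
        simp only [htg]
        exact Nat.add_le_add_left (Nat.mul_le_mul_right _ hjk) T₀))
      (fun j => Sev (tg j))
      (fun j => by
        have harith : tg j + M + 1 ≤ tg (j + 1) := by
          simp only [htg]
          ring_nf
          omega
        exact h𝔉mono harith _ (hSev𝔉 (tg j)))
      (ENNReal.ofReal (p ^ M))
      (by
        have : (0 : ℝ) < p ^ M := pow_pos hp M
        simp [ENNReal.ofReal_eq_zero, not_le, this])
      (ENNReal.ofReal_le_one.2 (pow_le_one₀ hp.le hp1))
      (fun j E hE => hclaim1 (tg j) (Nat.le_add_right _ _) E hE)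
    filter_upwards [haio] with ω hω L
    obtain ⟨j, hjL, hjS⟩ := hω L
    obtain ⟨r, hrM, hrd⟩ := hjS
    refine ⟨tg j + r, ?_, hrd⟩
    have h1 : L ≤ tg j := by
      refine le_trans hjL ?_
      simp only [htg]
      have : j ≤ j * (M + 1) := Nat.le_mul_of_pos_right j (Nat.succ_pos M)
      omega
    omega
  -- countable dense subset of A
  have hsep : ∃ s : Set X, s ⊆ A ∧ s.Countable ∧
      ∀ a ∈ A, ∀ r : ℝ, 0 < r → ∃ b ∈ s, dist a b < r := by
    obtain ⟨s₀, hs₀c, hs₀d⟩ := TopologicalSpace.exists_countable_dense ↥A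
    refine ⟨Subtype.val '' s₀, by rintro _ ⟨b, _, rfl⟩; exact b.2, hs₀c.image _, ?_⟩
    intro a ha r hr
    obtain ⟨b, hb1, hb2⟩ := Metric.dense_iff.1 hs₀d ⟨a, ha⟩ r hr
    refine ⟨b, ⟨b, hb2, rfl⟩, ?_⟩
    have := mem_ball.1 hb1
    rwa [Subtype.dist_eq, dist_comm] at this
  obtain ⟨s, hsA, hsc, hsd⟩ := hsep
  haveI := hsc.to_subtype
  have hae : ∀ᵐ ω ∂P, ∀ (b : ↥s) (r : ℕ), ∀ L : ℕ,
      ∃ k, L ≤ k ∧ dist (x k ω) (b : X) < 1 / (r + 1) := by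
    rw [ae_all_iff]
    intro b
    rw [ae_all_iff]
    intro r
    exact hstar b (hsA b.2) (1 / (r + 1)) (by positivity)
  filter_upwards [hae] with ω hω
  intro ε hε
  obtain ⟨T, hT⟩ := htail (ε / 2) (half_pos hε)
  refine ⟨T, fun L hL => ?_⟩
  have hhd : hausdorffDist A ((fun k => x k ω) '' Set.Ici L) ≤ ε / 2 := by
    refine hausdorffDist_le_of_infDist (half_pos hε).le ?_ ?_
    · intro y hy
      obtain ⟨r, hr⟩ := exists_nat_one_div_lt (show (0 : ℝ) < ε / 4 by linarith)
      obtain ⟨b, hbs, hbd⟩ := hsd y hy (1 / (r + 1)) (by positivity)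
      obtain ⟨k, hkL, hkd⟩ := hω ⟨b, hbs⟩ r L
      have hdy : dist y (x k ω) < ε / 2 := by
        calc dist y (x k ω) ≤ dist y b + dist b (x k ω) := dist_triangle _ _ _
          _ = dist y b + dist (x k ω) b := by rw [dist_comm b]
          _ < 1 / (r + 1) + 1 / (r + 1) := by exact add_lt_add hbd hkd
          _ < ε / 4 + ε / 4 := by exact add_lt_add hr hr
          _ = ε / 2 := by ring
      exact le_of_lt (lt_of_le_of_lt (infDist_le_dist_of_mem ⟨k, hkL, rfl⟩) hdy)
    · rintro y ⟨k, hk, rfl⟩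
      exact le_of_lt (hT k (le_trans hL hk) ω)
  exact lt_of_le_of_lt hhd (half_lt_self hε)
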